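/- Let H be a real Hilbert space and A : H → H be σ-strongly monotone and β-Lipschitz continuous with 0 < σ ≤ β. Then the reflected resolvent R_A = 2J_A − Id is δ-contractive with δ = √(1 − 4σ/(1 + 2σ + β²)) ∈ [0,1). -/
import Mathlib


open RealInnerProductSpace

theorem reflected_resolvent_contraction_sm_lipschitz
    {H : Type*} [NormedAddCommGroup H] [InnerProductSpace ℝ H]
    (σ β : ℝ) (hσ : 0 < σ) (hσβ : σ ≤ β)
    (A J : H → H)
    (hsm : ∀ x y : H, ⟪A x - A y, x - y⟫ ≥ σ * ‖x - y‖ ^ 2)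
    (hlip : ∀ x y : H, ‖A x - A y‖ ≤ β * ‖x - y‖)
    (hJ : ∀ x : H, J x + A (J x) = x) :
    (∀ x y : H, ‖((2 : ℝ) • J x - x) - ((2 : ℝ) • J y - y)‖ ≤
      Real.sqrt (1 - 4 * σ / (1 + 2 * σ + β ^ 2)) * ‖x - y‖) ∧
    Real.sqrt (1 - 4 * σ / (1 + 2 * σ + β ^ 2)) < 1 := by
  have hβ : 0 < β := lt_of_lt_of_le hσ hσβ
  have hc : 0 < 1 + 2 * σ + β ^ 2 := by nlinarith
  have hδ2 : 0 ≤ 1 - 4 * σ / (1 + 2 * σ + β ^ 2) := by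
    rw [sub_nonneg, div_le_one hc]; nlinarith [sq_nonneg (1 - β)]
  constructor
  · intro x y
    set u := J x
    set v := J y
    set w := u - v with hw
    set a := A u - A v with ha
    have hx : A (J x) = x - J x := eq_sub_of_add_eq' (hJ x)
    have hy : A (J y) = y - J y := eq_sub_of_add_eq' (hJ y)
    have hxy : x - y = w + a := by
      show x - y = (J x - J y) + (A (J x) - A (J y))
      rw [hx, hy]; abel
    have hR : ((2:ℝ) • J x - x) - ((2:ℝ) • J y - y) = w - a := by
      show _ = (J x - J y) - (A (J x) - A (J y))
      rw [hx, hy]; module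
    have hin : ⟪w, a⟫ ≥ σ * ‖w‖ ^ 2 := by
      have := hsm u v
      rwa [real_inner_comm] at this
    have hla : ‖a‖ ≤ β * ‖w‖ := hlip u v
    have e1 : ‖w + a‖ ^ 2 = ‖w‖ ^ 2 + 2 * ⟪w, a⟫ + ‖a‖ ^ 2 := by
      rw [@norm_add_sq_real]
    have e2 : ‖w - a‖ ^ 2 = ‖w‖ ^ 2 - 2 * ⟪w, a⟫ + ‖a‖ ^ 2 := by
      rw [@norm_sub_sq_real]
    have key : ‖w - a‖ ^ 2 ≤ (1 - 4 * σ / (1 + 2 * σ + β ^ 2)) * ‖w + a‖ ^ 2 := by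
      have h3 : σ * ‖w + a‖ ^ 2 ≤ (1 + 2 * σ + β ^ 2) * ⟪w, a⟫ := by
        have ha2 : ‖a‖ ^ 2 ≤ β ^ 2 * ‖w‖ ^ 2 := by
          nlinarith [norm_nonneg a, norm_nonneg w]
        have h5 : σ * ‖a‖ ^ 2 ≤ σ * (β ^ 2 * ‖w‖ ^ 2) :=
          mul_le_mul_of_nonneg_left ha2 hσ.le
        have h6 : β ^ 2 * (σ * ‖w‖ ^ 2) ≤ β ^ 2 * ⟪w, a⟫ :=
          mul_le_mul_of_nonneg_left hin (sq_nonneg β)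
        nlinarith [hin, h5, h6, e1]
      have h4 : 4 * σ / (1 + 2 * σ + β ^ 2) * ‖w + a‖ ^ 2 ≤ 4 * ⟪w, a⟫ := by
        rw [div_mul_eq_mul_div, div_le_iff₀ hc]; nlinarith
      nlinarith
    rw [hR, hxy]
    calc ‖w - a‖ = Real.sqrt (‖w - a‖ ^ 2) := by
            rw [Real.sqrt_sq (norm_nonneg _)]
      _ ≤ Real.sqrt ((1 - 4 * σ / (1 + 2 * σ + β ^ 2)) * ‖w + a‖ ^ 2) :=
            Real.sqrt_le_sqrt key
      _ = Real.sqrt (1 - 4 * σ / (1 + 2 * σ + β ^ 2)) * ‖w + a‖ := by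
            rw [Real.sqrt_mul hδ2, Real.sqrt_sq (norm_nonneg _)]
  · have h0 : 0 < 4 * σ / (1 + 2 * σ + β ^ 2) := by positivity
    have := Real.sqrt_lt_sqrt hδ2 (by linarith : 1 - 4 * σ / (1 + 2 * σ + β ^ 2) < 1)
    simpa using this
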